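/- For the cyclic vector field F with F_1 = (x_1^β+x_2^β)/(2S) − x_1, F_2 = (x_2^β+x_3^β)/(2S) − x_2, F_3 = (x_3^β+x_1^β)/(2S) − x_3 where S = x_1^β+x_2^β+x_3^β, the only zero of F in the 2-simplex is (1/3, 1/3, 1/3). -/

import Mathlib

noncomputable def cycF (β : ℝ) (i : Fin 3) (x₁ x₂ x₃ : ℝ) : ℝ :=
  let S := x₁ ^ β + x₂ ^ β + x₃ ^ β
  match i with
  | 0 => (x₁ ^ β + x₂ ^ β) / (2 * S) - x₁
  | 1 => (x₂ ^ β + x₃ ^ β) / (2 * S) - x₂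
  | 2 => (x₃ ^ β + x₁ ^ β) / (2 * S) - x₃

theorem cyclic_unique_zero (β : ℝ) (hβ : 0 < β)
    (x₁ x₂ x₃ : ℝ) (h1 : 0 ≤ x₁) (h2 : 0 ≤ x₂) (h3 : 0 ≤ x₃)
    (hsum : x₁ + x₂ + x₃ = 1) :
    (∀ i : Fin 3, cycF β i x₁ x₂ x₃ = 0) ↔ (x₁ = 1/3 ∧ x₂ = 1/3 ∧ x₃ = 1/3) := by
  have hS : 0 < x₁ ^ β + x₂ ^ β + x₃ ^ β := by
    have hp1 : 0 ≤ x₁ ^ β := Real.rpow_nonneg h1 β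
    have hp2 : 0 ≤ x₂ ^ β := Real.rpow_nonneg h2 β
    have hp3 : 0 ≤ x₃ ^ β := Real.rpow_nonneg h3 β
    rcases lt_or_eq_of_le h1 with hx1 | hx1
    · have : 0 < x₁ ^ β := Real.rpow_pos_of_pos hx1 β
      linarith
    rcases lt_or_eq_of_le h2 with hx2 | hx2
    · have : 0 < x₂ ^ β := Real.rpow_pos_of_pos hx2 β
      linarith
    rcases lt_or_eq_of_le h3 with hx3 | hx3
    · have : 0 < x₃ ^ β := Real.rpow_pos_of_pos hx3 β
      linarith
    · exfalso; rw [← hx1, ← hx2, ← hx3] at hsum; norm_num at hsum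
  set S := x₁ ^ β + x₂ ^ β + x₃ ^ β with hSdef
  constructor
  · intro h
    have e1 := h 0
    have e2 := h 1
    have e3 := h 2
    simp only [cycF] at e1 e2 e3
    have hq1 : x₁ ^ β + x₂ ^ β = 2 * S * x₁ := by
      have := sub_eq_zero.mp e1
      field_simp at this
      rw [div_eq_iff (show x₁ ^ β + x₂ ^ β + x₃ ^ β ≠ 0 from hS.ne')] at this
      linear_combination this
    have hq2 : x₂ ^ β + x₃ ^ β = 2 * S * x₂ := by
      have := sub_eq_zero.mp e2
      field_simp at this
      rw [div_eq_iff (show x₁ ^ β + x₂ ^ β + x₃ ^ β ≠ 0 from hS.ne')] at this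
      linear_combination this
    have hq3 : x₃ ^ β + x₁ ^ β = 2 * S * x₃ := by
      have := sub_eq_zero.mp e3
      field_simp at this
      rw [div_eq_iff (show x₁ ^ β + x₂ ^ β + x₃ ^ β ≠ 0 from hS.ne')] at this
      linear_combination this
    have key : x₁ = x₂ := by
      rcases lt_trichotomy x₁ x₂ with hlt | heq | hgt
      · -- x₁ < x₂ : then x₁^β - x₃^β = 2S(x₁-x₂) < 0, so x₁ < x₃
        have hb1 : x₁ ^ β < x₃ ^ β := by nlinarith [mul_pos hS (sub_pos.mpr hlt)]
        have h13 : x₁ < x₃ := (Real.rpow_lt_rpow_iff h1 h3 hβ).mp hb1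
        have hb3 : x₂ ^ β < x₃ ^ β := by nlinarith [mul_pos hS (sub_pos.mpr h13)]
        have h23 : x₂ < x₃ := (Real.rpow_lt_rpow_iff h2 h3 hβ).mp hb3
        have : x₂ ^ β < x₁ ^ β := by nlinarith [mul_pos hS (sub_pos.mpr h23)]
        exact absurd ((Real.rpow_lt_rpow_iff h2 h1 hβ).mp this) (not_lt.mpr hlt.le)
      · exact heq
      · have hb1 : x₃ ^ β < x₁ ^ β := by nlinarith [mul_pos hS (sub_pos.mpr hgt)]
        have h31 : x₃ < x₁ := (Real.rpow_lt_rpow_iff h3 h1 hβ).mp hb1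
        have hb3 : x₃ ^ β < x₂ ^ β := by nlinarith [mul_pos hS (sub_pos.mpr h31)]
        have h32 : x₃ < x₂ := (Real.rpow_lt_rpow_iff h3 h2 hβ).mp hb3
        have : x₁ ^ β < x₂ ^ β := by nlinarith [mul_pos hS (sub_pos.mpr h32)]
        exact absurd ((Real.rpow_lt_rpow_iff h1 h2 hβ).mp this) (not_lt.mpr hgt.le)
    have key2 : x₁ = x₃ := by
      have hb : x₁ ^ β = x₃ ^ β := by linear_combination hq1 - hq2 + (2*S)*key
      rcases lt_trichotomy x₁ x₃ with hlt | heq | hgt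
      · have := Real.rpow_lt_rpow h1 hlt hβ; linarith
      · exact heq
      · have := Real.rpow_lt_rpow h3 hgt hβ; linarith
    refine ⟨?_, ?_, ?_⟩ <;> [skip; rw [← key]; rw [← key2]] <;> linarith [key, key2]
  · rintro ⟨hx1, hx2, hx3⟩
    subst hx1 hx2 hx3
    intro i
    have hSval : S = 3 * (1/3 : ℝ) ^ β := by rw [hSdef]; ring
    have hpos : (0:ℝ) < (1/3 : ℝ) ^ β := Real.rpow_pos_of_pos (by norm_num) β
    fin_cases i <;> simp only [cycF] <;> rw [show ((1:ℝ)/3) ^ β + (1/3 : ℝ) ^ β + (1/3:ℝ) ^ β = 3 * (1/3:ℝ)^β by ring] <;> field_simp <;> ring
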